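/- In a linear triangular system A Y = ε with cov(ε) = Δ diagonal, if B = inv_a Ã denotes A (reordered compatibly with the partition (a,b)) partially inverted on a, then the equations in Y_b obtained by eliminating Y_a are B_{bb} Y_b = η_b with η_b = ε_b − B_{ba} ε_a, and cov(ε_a, η_b) = (Δ_{aa}, −Δ_{aa}B_{ba}ᵀ; −B_{ba}Δ_{aa}, Δ_{bb} + B_{ba}Δ_{aa}B_{ba}ᵀ). -/

import Mathlib

open MeasureTheory Matrix

/-- Partial inversion of a square real matrix with respect to a single index `k`. -/
noncomputable def invStep {ι : Type*} [DecidableEq ι] (M : Matrix ι ι ℝ) (k : ι) : Matrix ι ι ℝ :=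
  Matrix.of fun i j =>
    if i = k then (if j = k then 1 / M k k else - M k j / M k k)
    else if j = k then M i k / M k k
    else M i j - M i k * M k j / M k k

/-- Partial inversion with respect to a sequence of indices, applied in order. -/
noncomputable def invList {ι : Type*} [DecidableEq ι] (l : List ι) (M : Matrix ι ι ℝ) : Matrix ι ι ℝ :=
  l.foldl invStep M

/-- `A` reordered compatibly with the partition `(a, aᶜ)`. -/
def reorder {d : ℕ} (A : Matrix (Fin d) (Fin d) ℝ) (a : Finset (Fin d)) :
    Matrix (↥a ⊕ ↥(aᶜ)) (↥a ⊕ ↥(aᶜ)) ℝ :=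
  A.submatrix (Sum.elim Subtype.val Subtype.val) (Sum.elim Subtype.val Subtype.val)

/-- `B = inv_a Ã`, the reordered matrix partially inverted on `a`. -/
noncomputable def Btil {d : ℕ} (A : Matrix (Fin d) (Fin d) ℝ) (a : Finset (Fin d))
    (la : List (↥a ⊕ ↥(aᶜ))) : Matrix (↥a ⊕ ↥(aᶜ)) (↥a ⊕ ↥(aᶜ)) ℝ :=
  invList la (reorder A a)

/-- `η_b = ε_b − B_{ba} ε_a`. -/
noncomputable def etaB {d : ℕ} (A : Matrix (Fin d) (Fin d) ℝ) (a : Finset (Fin d))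
    (la : List (↥a ⊕ ↥(aᶜ))) (e : Fin d → ℝ) : ↥(aᶜ) → ℝ :=
  fun j => e ↑j - (Btil A a la).toBlocks₂₁.mulVec (fun i : ↥a => e ↑i) j

section Aux
open Matrix
variable {ι : Type*} [DecidableEq ι]

lemma invStep_kk (M : Matrix ι ι ℝ) (k : ι) : invStep M k k k = 1 / M k k := by
  simp [invStep]

lemma invStep_kj (M : Matrix ι ι ℝ) {k j : ι} (hj : j ≠ k) :
    invStep M k k j = - M k j / M k k := by simp [invStep, hj]

lemma invStep_ik (M : Matrix ι ι ℝ) {k i : ι} (hi : i ≠ k) :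
    invStep M k i k = M i k / M k k := by simp [invStep, hi]

lemma invStep_ij (M : Matrix ι ι ℝ) {k i j : ι} (hi : i ≠ k) (hj : j ≠ k) :
    invStep M k i j = M i j - M i k * M k j / M k k := by simp [invStep, hi, hj]

lemma invStep_mulVec_swap [Fintype ι]
    (M : Matrix ι ι ℝ) (k : ι) (hk : M k k ≠ 0)
    (x y : ι → ℝ) (h : M.mulVec x = y) :
    (invStep M k).mulVec (Function.update x k (y k)) = Function.update y k (x k) := by
  have hy : ∀ i, ∑ j, M i j * x j = y i := fun i => congrFun h i
  have hsplit : ∀ i, M i k * x k + ∑ j ∈ {k}ᶜ, M i j * x j = y i := by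
    intro i
    rw [← hy i, Fintype.sum_eq_add_sum_compl k (fun j => M i j * x j)]
  have h2 : ∑ j ∈ {k}ᶜ, M k j * x j = y k - M k k * x k := by
    have := hsplit k; linarith
  funext i
  rw [Matrix.mulVec, dotProduct, Fintype.sum_eq_add_sum_compl k,
    Function.update_self]
  by_cases hik : i = k
  · subst hik
    rw [Function.update_self, invStep_kk]
    have hthis : ∀ j ∈ ({i}ᶜ : Finset ι),
        invStep M i i j * Function.update x i (y i) j
        = (-(1 / M i i)) * (M i j * x j) := by
      intro j hj
      have hjk : j ≠ i := by simpa using hj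
      rw [invStep_kj M hjk, Function.update_of_ne hjk]
      ring
    rw [Finset.sum_congr rfl hthis, ← Finset.mul_sum, h2]
    field_simp
    ring
  · rw [Function.update_of_ne hik, invStep_ik M hik]
    have hthis : ∀ j ∈ ({k}ᶜ : Finset ι),
        invStep M k i j * Function.update x k (y k) j
        = M i j * x j - (M i k / M k k) * (M k j * x j) := by
      intro j hj
      have hjk : j ≠ k := by simpa using hj
      rw [invStep_ij M hik hjk, Function.update_of_ne hjk]
      ring
    rw [Finset.sum_congr rfl hthis, Finset.sum_sub_distrib, ← Finset.mul_sum, h2]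
    have h4 : ∑ j ∈ {k}ᶜ, M i j * x j = y i - M i k * x k := by
      have := hsplit i; linarith
    rw [h4]
    field_simp
    ring

/-- upper-triangular with unit diagonal, relative to an order embedding `f`. -/
def UTf {κ : Type*} [LinearOrder κ] (f : ι → κ) (M : Matrix ι ι ℝ) : Prop :=
  (∀ i j, f j < f i → M i j = 0) ∧ ∀ i, M i i = 1

lemma UTf_invStep {κ : Type*} [LinearOrder κ] {f : ι → κ}
    (hf : Function.Injective f) {M : Matrix ι ι ℝ} (hM : UTf f M) (k : ι) :
    UTf f (invStep M k) := by
  obtain ⟨hlo, hdg⟩ := hM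
  constructor
  · intro i j hlt
    by_cases hik : i = k
    · subst hik
      have hjk : j ≠ i := fun h => absurd hlt (by simp [h])
      rw [invStep_kj M hjk, hlo _ _ hlt]
      simp
    · by_cases hjk : j = k
      · subst hjk
        rw [invStep_ik M hik, hlo _ _ hlt]
        simp
      · rw [invStep_ij M hik hjk, hlo _ _ hlt]
        rcases lt_trichotomy (f i) (f k) with hc | hc | hc
        · rw [hlo k j (lt_trans hlt hc)]
          ring
        · exact absurd (hf hc) hik
        · rw [hlo i k hc]
          ring
  · intro i
    by_cases hik : i = k
    · subst hik
      rw [invStep_kk, hdg]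
      norm_num
    · rw [invStep_ij M hik hik]
      have hfik : f i ≠ f k := fun h => hik (hf h)
      rcases lt_or_gt_of_ne hfik with hc | hc
      · rw [hlo k i hc, hdg]
        ring
      · rw [hlo i k hc, hdg]
        ring

lemma invList_mulVec_swap [Fintype ι] {κ : Type*} [LinearOrder κ] {f : ι → κ}
    (hf : Function.Injective f) :
    ∀ (l : List ι), l.Nodup → ∀ (M : Matrix ι ι ℝ), UTf f M → ∀ x y : ι → ℝ,
      M.mulVec x = y →
      (invList l M).mulVec (fun i => if i ∈ l then y i else x i)
        = fun i => if i ∈ l then x i else y i := by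
  intro l
  induction l with
  | nil =>
    intro _ M _ x y h
    simpa [invList] using h
  | cons k t ih =>
    intro hnd M hM x y h
    rw [List.nodup_cons] at hnd
    have hk : M k k ≠ 0 := by rw [hM.2 k]; norm_num
    have hswap := invStep_mulVec_swap M k hk x y h
    have hUT := UTf_invStep hf hM k
    have hres := ih hnd.2 (invStep M k) hUT _ _ hswap
    have hstep : invList (k :: t) M = invList t (invStep M k) := rfl
    rw [hstep]
    have hx : (fun i => if i ∈ t then Function.update y k (x k) i
        else Function.update x k (y k) i)
        = fun i => if i ∈ (k :: t) then y i else x i := by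
      funext i
      by_cases hit : i ∈ t
      · have hik : i ≠ k := fun hh => hnd.1 (hh ▸ hit)
        simp [hit, Function.update_of_ne hik]
      · by_cases hik : i = k
        · subst hik
          simp [hit]
        · simp [hit, hik, Function.update_of_ne hik]
    have hy : (fun i => if i ∈ t then Function.update x k (y k) i
        else Function.update y k (x k) i)
        = fun i => if i ∈ (k :: t) then x i else y i := by
      funext i
      by_cases hit : i ∈ t
      · have hik : i ≠ k := fun hh => hnd.1 (hh ▸ hit)
        simp [hit, Function.update_of_ne hik]
      · by_cases hik : i = k
        · subst hik
          simp [hit]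
        · simp [hit, hik, Function.update_of_ne hik]
    rw [hx, hy] at hres
    exact hres

end Aux

/-- in a triangular system `A Y = ε` with `cov(ε) = Δ` diagonal, if
`B = inv_a Ã` is the reordered matrix partially inverted on `a`, then eliminating
`Y_a` gives `B_{bb} Y_b = η_b` with `η_b = ε_b − B_{ba} ε_a`, and
`cov(ε_a, η_b) = (Δ_{aa}, −Δ_{aa}B_{ba}ᵀ; −B_{ba}Δ_{aa}, Δ_{bb} + B_{ba}Δ_{aa}B_{ba}ᵀ)`. -/
theorem triangular_elimination {d : ℕ} {Ω : Type*} [MeasureSpace Ω]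
    [IsProbabilityMeasure (volume : Measure Ω)]
    (A Δ : Matrix (Fin d) (Fin d) ℝ)
    (htri : A.BlockTriangular id) (hunit : ∀ i, A i i = 1)
    (hΔdiag : Δ.IsDiag) (hΔpos : ∀ i, 0 < Δ i i)
    (a : Finset (Fin d)) (la : List (↥a ⊕ ↥(aᶜ)))
    (hna : la.Nodup) (hmem : ∀ x : ↥a ⊕ ↥(aᶜ), x ∈ la ↔ ∃ y : ↥a, x = Sum.inl y)
    (ε : Ω → Fin d → ℝ)
    (hmeas : ∀ i, Measurable fun ω => ε ω i)
    (hmean : ∀ i, ∫ ω, ε ω i = 0)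
    (hint : ∀ i j, Integrable fun ω => ε ω i * ε ω j)
    (hcov : ∀ i j, ∫ ω, ε ω i * ε ω j = Δ i j) :
    (∀ (y e : Fin d → ℝ), A.mulVec y = e →
        (Btil A a la).toBlocks₂₂.mulVec (fun j : ↥(aᶜ) => y ↑j) = etaB A a la e) ∧
      (∀ i j : ↥a, ∫ ω, ε ω ↑i * ε ω ↑j =
        (Matrix.of fun p q : ↥a => Δ ↑p ↑q) i j) ∧
      (∀ (i : ↥a) (j : ↥(aᶜ)), ∫ ω, ε ω ↑i * etaB A a la (ε ω) j =
        (-((Matrix.of fun p q : ↥a => Δ ↑p ↑q) * ((Btil A a la).toBlocks₂₁)ᵀ)) i j) ∧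
      (∀ i j : ↥(aᶜ), ∫ ω, etaB A a la (ε ω) i * etaB A a la (ε ω) j =
        ((Matrix.of fun p q : ↥(aᶜ) => Δ ↑p ↑q) +
          (Btil A a la).toBlocks₂₁ * (Matrix.of fun p q : ↥a => Δ ↑p ↑q) *
            ((Btil A a la).toBlocks₂₁)ᵀ) i j) := by
  
  have hne : ∀ (i : ↥a) (j : ↥(aᶜ)), (↑i : Fin d) ≠ ↑j := by
    intro i j h
    have hj := j.2
    rw [Finset.mem_compl] at hj
    exact hj (h ▸ i.2)
  -- Part 1 --
  have part1 : ∀ (y e : Fin d → ℝ), A.mulVec y = e →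
      (Btil A a la).toBlocks₂₂.mulVec (fun j : ↥(aᶜ) => y ↑j) = etaB A a la e := by
    intro y e hAy
    have hf : Function.Injective
        (Sum.elim (Subtype.val : ↥a → Fin d) (Subtype.val : ↥(aᶜ) → Fin d)) := by
      rintro (p | p) (q | q) h
      · simp only [Sum.elim_inl] at h
        exact congrArg Sum.inl (Subtype.ext h)
      · exfalso
        simp only [Sum.elim_inl, Sum.elim_inr] at h
        exact hne p q h
      · exfalso
        simp only [Sum.elim_inl, Sum.elim_inr] at h
        exact hne q p h.symm
      · simp only [Sum.elim_inr] at h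
        exact congrArg Sum.inr (Subtype.ext h)
    have hsurj : Function.Surjective
        (Sum.elim (Subtype.val : ↥a → Fin d) (Subtype.val : ↥(aᶜ) → Fin d)) := by
      intro v
      by_cases hv : v ∈ a
      · exact ⟨Sum.inl ⟨v, hv⟩, rfl⟩
      · exact ⟨Sum.inr ⟨v, Finset.mem_compl.mpr hv⟩, rfl⟩
    set f := Sum.elim (Subtype.val : ↥a → Fin d) (Subtype.val : ↥(aᶜ) → Fin d) with hfdef
    let E : (↥a ⊕ ↥(aᶜ)) ≃ Fin d := Equiv.ofBijective f ⟨hf, hsurj⟩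
    have hre : reorder A a = A.submatrix (⇑E) (⇑E) := rfl
    have hmul : (reorder A a).mulVec (y ∘ f) = e ∘ f := by
      rw [hre, Matrix.submatrix_mulVec_equiv]
      have hc : (y ∘ f) ∘ ⇑E.symm = y := by
        funext v
        show y (E (E.symm v)) = y v
        rw [Equiv.apply_symm_apply]
      rw [hc, hAy]
      rfl
    have hUT : UTf f (reorder A a) := by
      constructor
      · intro i j hlt
        show A (f i) (f j) = 0
        exact htri hlt
      · intro i
        show A (f i) (f i) = 1
        exact hunit _
    have hswap := invList_mulVec_swap hf la hna (reorder A a) hUT (y ∘ f) (e ∘ f) hmul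
    have hmeml : ∀ p : ↥a, (Sum.inl p : ↥a ⊕ ↥(aᶜ)) ∈ la := fun p => (hmem _).mpr ⟨p, rfl⟩
    have hnotmem : ∀ q : ↥(aᶜ), (Sum.inr q : ↥a ⊕ ↥(aᶜ)) ∉ la := by
      intro q hq
      obtain ⟨p, hp⟩ := (hmem _).mp hq
      cases hp
    funext j
    have hj := congrFun hswap (Sum.inr j)
    rw [Matrix.mulVec, dotProduct, Fintype.sum_sum_type] at hj
    simp only [hmeml, hnotmem, if_true, if_false, Function.comp_apply, hfdef,
      Sum.elim_inl, Sum.elim_inr] at hj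
    have hb1 : ∑ p : ↥a, (Btil A a la).toBlocks₂₁ j p * e ↑p
        = ∑ p : ↥a, invList la (reorder A a) (Sum.inr j) (Sum.inl p) * e ↑p :=
      Finset.sum_congr rfl fun p _ => rfl
    have hb2 : ∑ q : ↥(aᶜ), (Btil A a la).toBlocks₂₂ j q * y ↑q
        = ∑ q : ↥(aᶜ), invList la (reorder A a) (Sum.inr j) (Sum.inr q) * y ↑q :=
      Finset.sum_congr rfl fun q _ => rfl
    show ∑ q : ↥(aᶜ), (Btil A a la).toBlocks₂₂ j q * y ↑q
      = e ↑j - ∑ p : ↥a, (Btil A a la).toBlocks₂₁ j p * e ↑p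
    rw [hb1, hb2]
    linarith [hj]
  -- integral helpers --
  set B21 := (Btil A a la).toBlocks₂₁ with hB21def
  have keyInt : ∀ (i : Fin d) (c : ↥a → ℝ),
      Integrable (fun ω => ε ω i * ∑ k : ↥a, c k * ε ω ↑k) := by
    intro i c
    have hfun : (fun ω => ε ω i * ∑ k : ↥a, c k * ε ω ↑k)
        = fun ω => ∑ k : ↥a, c k * (ε ω i * ε ω ↑k) := by
      funext ω
      rw [Finset.mul_sum]
      exact Finset.sum_congr rfl fun k _ => by ring
    rw [hfun]
    exact integrable_finset_sum _ fun k _ => (hint i ↑k).const_mul _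
  have keyVal : ∀ (i : Fin d) (c : ↥a → ℝ),
      ∫ ω, ε ω i * ∑ k : ↥a, c k * ε ω ↑k = ∑ k : ↥a, c k * Δ i ↑k := by
    intro i c
    have hfun : (fun ω => ε ω i * ∑ k : ↥a, c k * ε ω ↑k)
        = fun ω => ∑ k : ↥a, c k * (ε ω i * ε ω ↑k) := by
      funext ω
      rw [Finset.mul_sum]
      exact Finset.sum_congr rfl fun k _ => by ring
    rw [hfun, integral_finset_sum (f := fun (k : ↥a) ω => c k * (ε ω i * ε ω ↑k))
      Finset.univ (fun k _ => (hint i ↑k).const_mul _)]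
    exact Finset.sum_congr rfl fun k _ => by rw [integral_const_mul, hcov]
  have keyInt2 : ∀ (c c' : ↥a → ℝ),
      Integrable (fun ω => (∑ k : ↥a, c k * ε ω ↑k) * (∑ l : ↥a, c' l * ε ω ↑l)) := by
    intro c c'
    have hfun : (fun ω => (∑ k : ↥a, c k * ε ω ↑k) * (∑ l : ↥a, c' l * ε ω ↑l))
        = fun ω => ∑ k : ↥a, ∑ l : ↥a, (c k * c' l) * (ε ω ↑k * ε ω ↑l) := by
      funext ω
      rw [Finset.sum_mul_sum]
      exact Finset.sum_congr rfl fun k _ => Finset.sum_congr rfl fun l _ => by ring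
    rw [hfun]
    exact integrable_finset_sum _ fun k _ =>
      integrable_finset_sum _ fun l _ => (hint ↑k ↑l).const_mul _
  have keyVal2 : ∀ (c c' : ↥a → ℝ),
      ∫ ω, (∑ k : ↥a, c k * ε ω ↑k) * (∑ l : ↥a, c' l * ε ω ↑l)
        = ∑ k : ↥a, ∑ l : ↥a, (c k * c' l) * Δ ↑k ↑l := by
    intro c c'
    have hfun : (fun ω => (∑ k : ↥a, c k * ε ω ↑k) * (∑ l : ↥a, c' l * ε ω ↑l))
        = fun ω => ∑ k : ↥a, ∑ l : ↥a, (c k * c' l) * (ε ω ↑k * ε ω ↑l) := by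
      funext ω
      rw [Finset.sum_mul_sum]
      exact Finset.sum_congr rfl fun k _ => Finset.sum_congr rfl fun l _ => by ring
    rw [hfun, integral_finset_sum
      (f := fun (k : ↥a) ω => ∑ l : ↥a, (c k * c' l) * (ε ω ↑k * ε ω ↑l))
      Finset.univ (fun k _ => integrable_finset_sum _ fun l _ => (hint ↑k ↑l).const_mul _)]
    refine Finset.sum_congr rfl fun k _ => ?_
    rw [integral_finset_sum (f := fun (l : ↥a) ω => (c k * c' l) * (ε ω ↑k * ε ω ↑l))
      Finset.univ (fun l _ => (hint ↑k ↑l).const_mul _)]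
    exact Finset.sum_congr rfl fun l _ => by rw [integral_const_mul, hcov]
  have hEta : ∀ (v : Fin d → ℝ) (j : ↥(aᶜ)), etaB A a la v j
      = v ↑j - ∑ k : ↥a, B21 j k * v ↑k := fun v j => rfl
  refine ⟨part1, fun i j => by rw [hcov]; rfl, ?_, ?_⟩
  -- Part 3 --
  · intro i j
    have hfn : (fun ω => ε ω ↑i * etaB A a la (ε ω) j)
        = fun ω => ε ω ↑i * ε ω ↑j - ε ω ↑i * ∑ k : ↥a, B21 j k * ε ω ↑k := by
      funext ω
      rw [hEta]
      ring
    rw [hfn, integral_sub (hint _ _) (keyInt _ _), hcov, keyVal]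
    have hzero : Δ ↑i ↑j = 0 := hΔdiag (hne i j)
    have hsum : ∑ k : ↥a, B21 j k * Δ ↑i ↑k = B21 j i * Δ ↑i ↑i := by
      rw [Finset.sum_eq_single i]
      · intro k _ hk
        rw [hΔdiag (fun h => hk (Subtype.ext h).symm), mul_zero]
      · intro h
        exact absurd (Finset.mem_univ i) h
    rw [hzero, hsum]
    simp only [Matrix.neg_apply, Matrix.mul_apply, Matrix.transpose_apply, Matrix.of_apply]
    rw [Finset.sum_eq_single i]
    · ring
    · intro k _ hk
      rw [hΔdiag (fun h => hk (Subtype.ext h.symm)), zero_mul]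
    · intro h
      exact absurd (Finset.mem_univ i) h
  -- Part 4 --
  · intro i j
    have hfn : (fun ω => etaB A a la (ε ω) i * etaB A a la (ε ω) j)
        = fun ω => (ε ω ↑i * ε ω ↑j - ε ω ↑i * ∑ l : ↥a, B21 j l * ε ω ↑l)
            - (ε ω ↑j * ∑ k : ↥a, B21 i k * ε ω ↑k
              - (∑ k : ↥a, B21 i k * ε ω ↑k) * (∑ l : ↥a, B21 j l * ε ω ↑l)) := by
      funext ω
      rw [hEta, hEta]
      ring
    have I1 : Integrable (fun ω => ε ω ↑i * ε ω ↑j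
        - ε ω ↑i * ∑ l : ↥a, B21 j l * ε ω ↑l) := by
      exact (hint _ _).sub (keyInt _ _)
    have I2 : Integrable (fun ω => ε ω ↑j * ∑ k : ↥a, B21 i k * ε ω ↑k
        - (∑ k : ↥a, B21 i k * ε ω ↑k) * (∑ l : ↥a, B21 j l * ε ω ↑l)) := by
      exact (keyInt _ _).sub (keyInt2 _ _)
    rw [hfn, integral_sub I1 I2,
      integral_sub (hint _ _) (keyInt _ _), integral_sub (keyInt _ _) (keyInt2 _ _),
      hcov, keyVal, keyVal, keyVal2]
    have hz1 : ∑ l : ↥a, B21 j l * Δ ↑i ↑l = 0 := by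
      apply Finset.sum_eq_zero
      intro l _
      rw [hΔdiag (hne l i).symm, mul_zero]
    have hz2 : ∑ k : ↥a, B21 i k * Δ ↑j ↑k = 0 := by
      apply Finset.sum_eq_zero
      intro k _
      rw [hΔdiag (hne k j).symm, mul_zero]
    have hdbl : ∑ k : ↥a, ∑ l : ↥a, (B21 i k * B21 j l) * Δ ↑k ↑l
        = ∑ k : ↥a, B21 i k * B21 j k * Δ ↑k ↑k := by
      refine Finset.sum_congr rfl fun k _ => ?_
      rw [Finset.sum_eq_single k]
      · intro l _ hl
        rw [hΔdiag (fun h => hl (Subtype.ext h.symm)), mul_zero]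
      · intro h
        exact absurd (Finset.mem_univ k) h
    rw [hz1, hz2, hdbl]
    simp only [Matrix.add_apply, Matrix.mul_apply, Matrix.transpose_apply, Matrix.of_apply]
    have hinner : ∀ l : ↥a, (∑ k : ↥a, B21 i k * Δ ↑k ↑l) * B21 j l
        = B21 i l * Δ ↑l ↑l * B21 j l := by
      intro l
      congr 1
      rw [Finset.sum_eq_single l]
      · intro k _ hk
        rw [hΔdiag (fun h => hk (Subtype.ext h)), mul_zero]
      · intro h
        exact absurd (Finset.mem_univ l) h
    rw [Finset.sum_congr rfl (fun l _ => hinner l)]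
    ring_nf
    rw [Finset.sum_congr rfl (fun k (_ : k ∈ Finset.univ) => by ring :
      ∀ k ∈ Finset.univ, B21 i k * B21 j k * Δ ↑k ↑k = B21 i k * Δ ↑k ↑k * B21 j k)]
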